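/- For any three square-integrable random variables a, b, c with strictly positive variances, cor(a,b)·cor(b,c) − √(1−cor(a,b)²)·√(1−cor(b,c)²) ≤ cor(a,c) ≤ cor(a,b)·cor(b,c) + √(1−cor(a,b)²)·√(1−cor(b,c)²). -/

import Mathlib

open MeasureTheory ProbabilityTheory

lemma unit_cor_bound' {E : Type*} [NormedAddCommGroup E] [InnerProductSpace ℝ E]
    (u v w : E) (hu : ‖u‖ = 1) (hv : ‖v‖ = 1) (hw : ‖w‖ = 1) :
    |inner ℝ u w - inner ℝ u v * inner ℝ v w| ≤
      Real.sqrt (1 - (inner ℝ u v : ℝ)^2) * Real.sqrt (1 - (inner ℝ v w : ℝ)^2) := by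
  have hvv : (inner ℝ v v : ℝ) = 1 := by
    rw [real_inner_self_eq_norm_sq, hv]; norm_num
  have h1 : (inner ℝ (u - (inner ℝ u v : ℝ) • v) (w - (inner ℝ v w : ℝ) • v) : ℝ)
      = inner ℝ u w - inner ℝ u v * inner ℝ v w := by
    rw [inner_sub_left, inner_sub_right, inner_sub_right,
      real_inner_smul_left, real_inner_smul_left, real_inner_smul_right,
      real_inner_smul_right, hvv]
    ring
  have h2 : ‖u - (inner ℝ u v : ℝ) • v‖^2 = 1 - (inner ℝ u v : ℝ)^2 := by
    rw [← real_inner_self_eq_norm_sq, inner_sub_left, inner_sub_right, inner_sub_right,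
      real_inner_smul_left, real_inner_smul_left, real_inner_smul_right,
      real_inner_smul_right, hvv, real_inner_comm v u, real_inner_self_eq_norm_sq, hu]
    ring
  have h3 : ‖w - (inner ℝ v w : ℝ) • v‖^2 = 1 - (inner ℝ v w : ℝ)^2 := by
    rw [← real_inner_self_eq_norm_sq, inner_sub_left, inner_sub_right, inner_sub_right,
      real_inner_smul_left, real_inner_smul_left, real_inner_smul_right,
      real_inner_smul_right, hvv, real_inner_comm v w, real_inner_self_eq_norm_sq, hw]
    ring
  calc |(inner ℝ u w : ℝ) - inner ℝ u v * inner ℝ v w|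
      = |(inner ℝ (u - (inner ℝ u v : ℝ) • v) (w - (inner ℝ v w : ℝ) • v) : ℝ)| := by rw [h1]
    _ ≤ ‖u - (inner ℝ u v : ℝ) • v‖ * ‖w - (inner ℝ v w : ℝ) • v‖ := abs_real_inner_le_norm _ _
    _ = Real.sqrt (1 - (inner ℝ u v : ℝ)^2) * Real.sqrt (1 - (inner ℝ v w : ℝ)^2) := by
        rw [← h2, ← h3, Real.sqrt_sq (norm_nonneg _), Real.sqrt_sq (norm_nonneg _)]

lemma cor_bound_vec {E : Type*} [NormedAddCommGroup E] [InnerProductSpace ℝ E]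
    (x y z : E) (hx : x ≠ 0) (hy : y ≠ 0) (hz : z ≠ 0) :
    |(inner ℝ x z : ℝ) / (‖x‖ * ‖z‖) -
        (inner ℝ x y : ℝ) / (‖x‖ * ‖y‖) * ((inner ℝ y z : ℝ) / (‖y‖ * ‖z‖))| ≤
      Real.sqrt (1 - ((inner ℝ x y : ℝ) / (‖x‖ * ‖y‖))^2) *
      Real.sqrt (1 - ((inner ℝ y z : ℝ) / (‖y‖ * ‖z‖))^2) := by
  have hx' : ‖x‖ ≠ 0 := norm_ne_zero_iff.2 hx
  have hy' : ‖y‖ ≠ 0 := norm_ne_zero_iff.2 hy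
  have hz' : ‖z‖ ≠ 0 := norm_ne_zero_iff.2 hz
  have h := unit_cor_bound' (‖x‖⁻¹ • x) (‖y‖⁻¹ • y) (‖z‖⁻¹ • z)
    (norm_smul_inv_norm hx) (norm_smul_inv_norm hy) (norm_smul_inv_norm hz)
  simpa [real_inner_smul_left, real_inner_smul_right, div_eq_mul_inv, mul_comm,
    mul_left_comm, mul_assoc] using h

noncomputable def cov {Ω : Type*} [MeasureSpace Ω] (X Y : Ω → ℝ) : ℝ :=
  ∫ ω, (X ω - ∫ a, X a) * (Y ω - ∫ a, Y a)

noncomputable def cor {Ω : Type*} [MeasureSpace Ω] (X Y : Ω → ℝ) : ℝ :=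
  cov X Y / Real.sqrt (variance X volume * variance Y volume)

section aux
variable {Ω : Type*} [MeasureSpace Ω] [IsProbabilityMeasure (volume : Measure Ω)]

lemma inner_toLp_eq_cov (X Y : Ω → ℝ) (hX : MemLp X 2 volume) (hY : MemLp Y 2 volume) :
    (inner ℝ ((hX.sub (memLp_const (∫ x, X x))).toLp _)
           ((hY.sub (memLp_const (∫ x, Y x))).toLp _) : ℝ) = cov X Y := by
  rw [MeasureTheory.L2.inner_def, cov]
  refine integral_congr_ae ?_
  filter_upwards [MemLp.coeFn_toLp (hX.sub (memLp_const (∫ x, X x))),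
    MemLp.coeFn_toLp (hY.sub (memLp_const (∫ x, Y x)))] with ω h1 h2
  simp [h1, h2, RCLike.inner_apply]; ring

lemma norm_sq_toLp_eq_var (X : Ω → ℝ) (hX : MemLp X 2 volume) :
    ‖(hX.sub (memLp_const (∫ x, X x))).toLp _‖^2 = variance X volume := by
  rw [← real_inner_self_eq_norm_sq, inner_toLp_eq_cov X X hX hX, variance_eq_integral hX.aestronglyMeasurable.aemeasurable, cov]
  refine integral_congr_ae (ae_of_all _ fun ω => ?_)
  simp [sq]

lemma cor_eq (X Y : Ω → ℝ) (hX : MemLp X 2 volume) (hY : MemLp Y 2 volume) :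
    cor X Y = (inner ℝ ((hX.sub (memLp_const (∫ x, X x))).toLp _)
        ((hY.sub (memLp_const (∫ x, Y x))).toLp _) : ℝ) /
      (‖(hX.sub (memLp_const (∫ x, X x))).toLp (μ := volume) _‖ *
       ‖(hY.sub (memLp_const (∫ x, Y x))).toLp (μ := volume) _‖) := by
  rw [cor, inner_toLp_eq_cov X Y hX hY, ← norm_sq_toLp_eq_var X hX, ← norm_sq_toLp_eq_var Y hY,
    Real.sqrt_mul (sq_nonneg _), Real.sqrt_sq (norm_nonneg _), Real.sqrt_sq (norm_nonneg _)]

end aux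

/-- Recursive partial-correlation bound: for square-integrable `a, b, c` with positive
variances, `cor(a,c)` lies within
`cor(a,b)·cor(b,c) ± √(1−cor(a,b)²)·√(1−cor(b,c)²)`. -/
theorem correlation_recursive_bound {Ω : Type*} [MeasureSpace Ω]
    [IsProbabilityMeasure (volume : Measure Ω)]
    (a b c : Ω → ℝ)
    (ha : MemLp a 2 volume) (hb : MemLp b 2 volume) (hc : MemLp c 2 volume)
    (hva : 0 < variance a volume) (hvb : 0 < variance b volume)
    (hvc : 0 < variance c volume) :
    cor a b * cor b c - Real.sqrt (1 - (cor a b)^2) * Real.sqrt (1 - (cor b c)^2)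
        ≤ cor a c ∧
    cor a c
        ≤ cor a b * cor b c + Real.sqrt (1 - (cor a b)^2) * Real.sqrt (1 - (cor b c)^2) := by
  set A := (ha.sub (memLp_const (∫ x, a x))).toLp (μ := volume) _ with hA
  set B := (hb.sub (memLp_const (∫ x, b x))).toLp (μ := volume) _ with hB
  set C := (hc.sub (memLp_const (∫ x, c x))).toLp (μ := volume) _ with hC
  have hAne : A ≠ 0 := by
    intro h
    rw [← norm_sq_toLp_eq_var a ha, ← hA, h, norm_zero] at hva
    simp at hva
  have hBne : B ≠ 0 := by
    intro h
    rw [← norm_sq_toLp_eq_var b hb, ← hB, h, norm_zero] at hvb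
    simp at hvb
  have hCne : C ≠ 0 := by
    intro h
    rw [← norm_sq_toLp_eq_var c hc, ← hC, h, norm_zero] at hvc
    simp at hvc
  have e1 : cor a b = (inner ℝ A B : ℝ) / (‖A‖ * ‖B‖) := cor_eq a b ha hb
  have e2 : cor b c = (inner ℝ B C : ℝ) / (‖B‖ * ‖C‖) := cor_eq b c hb hc
  have e3 : cor a c = (inner ℝ A C : ℝ) / (‖A‖ * ‖C‖) := cor_eq a c ha hc
  have h := cor_bound_vec A B C hAne hBne hCne
  rw [← e1, ← e2, ← e3] at h
  rw [abs_le] at h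
  constructor <;> linarith [h.1, h.2]
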